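/- Let β ∈ [−1, 1], a ∈ ℝ, and let θ, A be reals with 0 < A < θ. For each γ > 0 let μ_γ be a probability measure on ℝ whose characteristic function satisfies, for all ω ∈ ℝ, φ_{μ_γ}(ω) = exp( i·a·ω − γ·|ω|·(1 − 2i·β·sign(ω)·ln|ω|/π) ) (with the convention that the factor is 1 at ω = 0), and set P_γ = μ_γ((θ − A, θ + A)). Then: (i) if a ∉ [θ − A, θ + A], P_γ → 0 as γ → 0⁺; and (ii) if θ − A < a < θ + A, P_γ → 1 as γ → 0⁺. -/

import Mathlib

open MeasureTheory Filter Set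

open intervalIntegral

noncomputable def FIgfun (u a x : ℝ) : ℝ :=
  if x = a then 0 else 2 * u - 2 * Real.sin (u * (x - a)) / (x - a)

lemma FIg_eq (u a x : ℝ) :
    (∫ t in (-u)..u, (1 - Real.cos (t * (x - a)))) = FIgfun u a x := by
  have hint : IntervalIntegrable (fun t => Real.cos (t * (x - a))) volume (-u) u :=
    (Real.continuous_cos.comp (continuous_id.mul continuous_const)).intervalIntegrable _ _
  rw [intervalIntegral.integral_sub intervalIntegrable_const hint,
    intervalIntegral.integral_const]
  by_cases h : x = a
  · simp [FIgfun, h]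
  · have hc : x - a ≠ 0 := sub_ne_zero.mpr h
    rw [FIgfun, if_neg h, intervalIntegral.integral_comp_mul_right Real.cos hc, integral_cos,
      smul_eq_mul, smul_eq_mul, neg_mul, Real.sin_neg]
    field_simp
    ring

lemma FIg_nonneg {u : ℝ} (hu : 0 ≤ u) (a x : ℝ) : 0 ≤ FIgfun u a x := by
  rw [← FIg_eq]
  apply intervalIntegral.integral_nonneg (by linarith)
  intro t _
  have := Real.cos_le_one (t * (x - a)); linarith

lemma FIg_le {u : ℝ} (hu : 0 ≤ u) (a x : ℝ) : FIgfun u a x ≤ 4 * u := by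
  rw [FIgfun]
  by_cases h : x = a
  · rw [if_pos h]; linarith
  · rw [if_neg h]
    have hc : x - a ≠ 0 := sub_ne_zero.mpr h
    have h1 : |2 * Real.sin (u * (x - a)) / (x - a)| ≤ 2 * u := by
      rw [abs_div, abs_mul, div_le_iff₀ (abs_pos.mpr hc)]
      calc |2| * |Real.sin (u * (x - a))| ≤ 2 * |u * (x - a)| := by
            rw [abs_two]
            exact mul_le_mul_of_nonneg_left Real.abs_sin_le_abs (by norm_num)
        _ = 2 * u * |x - a| := by rw [abs_mul, abs_of_nonneg hu]; ring
    have := (abs_le.mp h1).1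
    linarith

lemma FIg_ge {u : ℝ} (hu : 0 < u) {a x : ℝ} (h : 2 / u ≤ |x - a|) :
    u ≤ FIgfun u a x := by
  have hx : x ≠ a := by
    intro he
    rw [he] at h; simp at h
    have : 0 < 2 / u := by positivity
    linarith
  rw [FIgfun, if_neg hx]
  have hc : x - a ≠ 0 := sub_ne_zero.mpr hx
  have habs : 0 < |x - a| := abs_pos.mpr hc
  have h1 : |2 * Real.sin (u * (x - a)) / (x - a)| ≤ u := by
    rw [abs_div, abs_mul, abs_two, div_le_iff₀ habs]
    calc 2 * |Real.sin (u * (x - a))| ≤ 2 * 1 :=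
          mul_le_mul_of_nonneg_left (Real.abs_sin_le_one _) (by norm_num)
      _ ≤ u * |x - a| := by
          have : 2 / u * u ≤ |x - a| * u := mul_le_mul_of_nonneg_right h hu.le
          rw [div_mul_cancel₀ 2 hu.ne'] at this
          linarith
  have := (abs_le.mp h1).2
  linarith

lemma FIcos_eq (u a x : ℝ) :
    (∫ t in (-u)..u, Real.cos (t * (x - a))) = 2 * u - FIgfun u a x := by
  have h := FIg_eq u a x
  have hint : IntervalIntegrable (fun t => Real.cos (t * (x - a))) volume (-u) u :=
    (Real.continuous_cos.comp (continuous_id.mul continuous_const)).intervalIntegrable _ _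
  rw [intervalIntegral.integral_sub intervalIntegrable_const hint,
    intervalIntegral.integral_const, smul_eq_mul] at h
  linarith

lemma FIg_measurable (u a : ℝ) : Measurable (FIgfun u a) := by
  unfold FIgfun
  exact Measurable.ite (measurableSet_eq_fun measurable_id measurable_const)
    measurable_const
    (measurable_const.sub ((measurable_const.mul
      (Real.measurable_sin.comp (measurable_const.mul (measurable_id.sub measurable_const)))).div
      (measurable_id.sub measurable_const)))

lemma FIkey (μ : Measure ℝ) [IsProbabilityMeasure μ] (a u : ℝ) (hu : 0 < u) :
    u * (μ {x | 2 / u ≤ |x - a|}).toReal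
      ≤ ∫ t in (-u)..u, (1 - ∫ x, Real.cos (t * (x - a)) ∂μ) := by
  have hle : (-u) ≤ u := by linarith
  haveI : IsFiniteMeasure (volume.restrict (Ioc (-u) u)) :=
    ⟨by rw [Measure.restrict_apply_univ]; exact measure_Ioc_lt_top⟩
  set ρ := volume.restrict (Ioc (-u) u) with hρ
  have hKc : Continuous (fun p : ℝ × ℝ => Real.cos (p.1 * (p.2 - a))) :=
    Real.continuous_cos.comp (continuous_fst.mul (continuous_snd.sub continuous_const))
  have hK : Integrable (fun p : ℝ × ℝ => Real.cos (p.1 * (p.2 - a))) (ρ.prod μ) := by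
    refine ⟨hKc.aestronglyMeasurable, ?_⟩
    apply HasFiniteIntegral.of_bounded (C := 1)
    filter_upwards with p
    simpa using Real.abs_cos_le_one _
  have hh : Integrable (fun t => ∫ x, Real.cos (t * (x - a)) ∂μ) ρ := by
    exact hK.integral_prod_left
  -- rewrite interval integrals as set integrals
  rw [intervalIntegral.integral_of_le hle, ← hρ]
  have hvol : (ρ univ).toReal = 2 * u := by
    rw [Measure.restrict_apply_univ, Real.volume_Ioc, ENNReal.toReal_ofReal (by linarith)]
    ring
  have h1 : (∫ t, (1 - ∫ x, Real.cos (t * (x - a)) ∂μ) ∂ρ)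
      = 2 * u - ∫ t, (∫ x, Real.cos (t * (x - a)) ∂μ) ∂ρ := by
    rw [integral_sub (integrable_const 1) hh, MeasureTheory.integral_const, smul_eq_mul, mul_one, Measure.real_def, hvol]
  have hswap : (∫ t, (∫ x, Real.cos (t * (x - a)) ∂μ) ∂ρ)
      = ∫ x, (∫ t, Real.cos (t * (x - a)) ∂ρ) ∂μ :=
    MeasureTheory.integral_integral_swap hK
  have hinner : ∀ x, (∫ t, Real.cos (t * (x - a)) ∂ρ) = 2 * u - FIgfun u a x := by
    intro x
    rw [hρ, ← intervalIntegral.integral_of_le hle]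
    exact FIcos_eq u a x
  have hgint : Integrable (FIgfun u a) μ := by
    refine ⟨((FIg_measurable u a).aestronglyMeasurable), ?_⟩
    apply HasFiniteIntegral.of_bounded (C := 4 * u)
    filter_upwards with x
    rw [Real.norm_eq_abs, abs_of_nonneg (FIg_nonneg hu.le a x)]
    exact FIg_le hu.le a x
  have h2 : (∫ x, (∫ t, Real.cos (t * (x - a)) ∂ρ) ∂μ) = 2 * u - ∫ x, FIgfun u a x ∂μ := by
    simp_rw [hinner]
    rw [integral_sub (integrable_const _) hgint, MeasureTheory.integral_const, Measure.real_def, measure_univ, smul_eq_mul]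
    norm_num
  rw [h1, hswap, h2]
  have hs : MeasurableSet {x : ℝ | 2 / u ≤ |x - a|} :=
    measurableSet_le measurable_const ((measurable_id.sub measurable_const).abs)
  have hind : u * (μ {x | 2 / u ≤ |x - a|}).toReal
      = ∫ x, ({x : ℝ | 2 / u ≤ |x - a|}).indicator (fun _ => u) x ∂μ := by
    rw [integral_indicator_const _ hs, smul_eq_mul, Measure.real_def]; ring
  rw [hind]
  have hmono : (∫ x, ({x : ℝ | 2 / u ≤ |x - a|}).indicator (fun _ => u) x ∂μ)
      ≤ ∫ x, FIgfun u a x ∂μ := by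
    apply integral_mono ((integrable_const u).indicator hs) hgint
    intro x
    rw [Set.indicator]
    split_ifs with hx
    · exact FIg_ge hu hx
    · exact FIg_nonneg hu.le a x
  linarith

noncomputable def FIC (β t : ℝ) : ℂ :=
  ((|t| : ℝ) : ℂ) * (1 - 2 * Complex.I * (β : ℂ) * ((Real.sign t : ℝ) : ℂ) *
    ((Real.log |t| : ℝ) : ℂ) / ((Real.pi : ℝ) : ℂ))

lemma FIC_eq (β t : ℝ) (hπ : (Real.pi : ℝ) ≠ 0) :
    ∀ γ : ℝ, -(γ:ℂ) * FIC β t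
      = Complex.ofReal (-(γ * |t|))
        + Complex.ofReal (γ * |t| * (2 * β * Real.sign t * Real.log |t| / Real.pi)) * Complex.I := by
  intro γ
  rw [FIC]
  have hπC : ((Real.pi : ℝ) : ℂ) ≠ 0 := Complex.ofReal_ne_zero.mpr hπ
  field_simp
  push_cast
  have := mul_inv_cancel₀ hπC
  linear_combination (-((γ:ℂ) * ((|t|:ℝ):ℂ) * Complex.I * (β:ℂ) * ((Real.sign t:ℝ):ℂ) * ((Real.log |t| : ℝ):ℂ) * 2)) * this

lemma FIC_re (β t γ : ℝ) : (-(γ:ℂ) * FIC β t).re = -(γ * |t|) := by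
  rw [FIC_eq β t Real.pi_ne_zero γ]
  simp

lemma FIC_measurable (β : ℝ) : Measurable (FIC β) := by
  have hsign : Measurable Real.sign := by
    unfold Real.sign
    exact Measurable.ite (measurableSet_lt measurable_id measurable_const) measurable_const
      (Measurable.ite (measurableSet_lt measurable_const measurable_id) measurable_const
        measurable_const)
  unfold FIC
  apply Measurable.mul
  · exact Complex.measurable_ofReal.comp measurable_id.abs
  · apply Measurable.sub measurable_const
    apply Measurable.div _ measurable_const
    exact ((measurable_const.mul (Complex.measurable_ofReal.comp hsign)).mul
      (Complex.measurable_ofReal.comp (Real.measurable_log.comp measurable_id.abs)))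

lemma FIcos_char (μ : Measure ℝ) [IsProbabilityMeasure μ] (a β γ t : ℝ)
    (hchar : ∫ x, Complex.exp (Complex.I * t * x) ∂μ
        = Complex.exp (Complex.I * a * t - (γ : ℂ) * FIC β t)) :
    (∫ x, Real.cos (t * (x - a)) ∂μ) = (Complex.exp (-(γ:ℂ) * FIC β t)).re := by
  have hform : ∀ x : ℝ, ((t * (x - a) : ℝ) : ℂ) * Complex.I
      = -(Complex.I * a * t) + Complex.I * t * x := by
    intro x; push_cast; ring
  have hcos : ∀ x : ℝ, Real.cos (t * (x - a))
      = (Complex.exp (((t * (x - a) : ℝ) : ℂ) * Complex.I)).re := by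
    intro x; rw [Complex.exp_ofReal_mul_I_re]
  have hint : Integrable (fun x : ℝ => Complex.exp (((t * (x - a) : ℝ) : ℂ) * Complex.I)) μ := by
    refine ⟨?_, ?_⟩
    · apply Continuous.aestronglyMeasurable
      exact Complex.continuous_exp.comp
        ((Complex.continuous_ofReal.comp
          (continuous_const.mul (continuous_id.sub continuous_const))).mul continuous_const)
    · apply HasFiniteIntegral.of_bounded (C := 1)
      filter_upwards with x
      rw [Complex.norm_exp_ofReal_mul_I]
  simp_rw [hcos]
  have h2 := integral_re hint
  simp only [RCLike.re_to_complex] at h2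
  rw [h2]
  congr 1
  simp_rw [hform, Complex.exp_add]
  rw [MeasureTheory.integral_const_mul, hchar, ← Complex.exp_add]
  congr 1
  ring

lemma FItail (β a : ℝ) (μ : ℝ → Measure ℝ) (hprob : ∀ γ, 0 < γ → IsProbabilityMeasure (μ γ))
    (hchar' : ∀ γ, 0 < γ → ∀ t : ℝ, ∫ x, Complex.exp (Complex.I * t * x) ∂(μ γ)
        = Complex.exp (Complex.I * a * t - (γ : ℂ) * FIC β t))
    {ε : ℝ} (hε : 0 < ε) :
    Tendsto (fun γ => ((μ γ) {x | ε ≤ |x - a|}).toReal) (nhdsWithin 0 (Ioi 0)) (nhds 0) := by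
  set u := 2 / ε with hudef
  have hu : 0 < u := by positivity
  have hεu : 2 / u = ε := by rw [hudef]; field_simp
  haveI : IsFiniteMeasure (volume.restrict (Ioc (-u) u)) :=
    ⟨by rw [Measure.restrict_apply_univ]; exact measure_Ioc_lt_top⟩
  set F : ℝ → ℝ → ℝ := fun γ t => 1 - (Complex.exp (-(γ:ℂ) * FIC β t)).re with hF
  have hA : Tendsto (fun γ => ∫ t in Ioc (-u) u, F γ t) (nhdsWithin 0 (Ioi 0)) (nhds 0) := by
    have hA' : Tendsto (fun γ => ∫ t in Ioc (-u) u, F γ t) (nhdsWithin 0 (Ioi 0))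
        (nhds (∫ (_ : ℝ) in Ioc (-u) u, (0 : ℝ))) := by
      apply MeasureTheory.tendsto_integral_filter_of_dominated_convergence
        (bound := fun _ => (2:ℝ))
      · filter_upwards with γ
        exact ((measurable_const.sub (Complex.measurable_re.comp
          (Complex.measurable_exp.comp ((FIC_measurable β).const_mul (-(γ:ℂ)))))).aestronglyMeasurable)
      · filter_upwards [self_mem_nhdsWithin] with γ hγ
        filter_upwards with t
        have hre : (-(γ:ℂ) * FIC β t).re = -(γ * |t|) := FIC_re β t γ
        have habs : |(Complex.exp (-(γ:ℂ) * FIC β t)).re| ≤ 1 := by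
          calc |(Complex.exp (-(γ:ℂ) * FIC β t)).re|
              ≤ ‖Complex.exp (-(γ:ℂ) * FIC β t)‖ := Complex.abs_re_le_norm _
            _ = Real.exp ((-(γ:ℂ) * FIC β t).re) := Complex.norm_exp _
            _ ≤ 1 := by
                rw [hre, Real.exp_le_one_iff, neg_nonpos]
                have hγ' : (0:ℝ) < γ := hγ
                positivity
        show ‖1 - (Complex.exp (-(γ:ℂ) * FIC β t)).re‖ ≤ 2
        rw [Real.norm_eq_abs]
        have h1 := (abs_le.mp habs).1
        have h2 := (abs_le.mp habs).2
        rw [abs_le]; constructor <;> linarith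
      · exact integrable_const 2
      · filter_upwards with t
        have hc : Continuous fun γ : ℝ => 1 - (Complex.exp (-(γ:ℂ) * FIC β t)).re :=
          continuous_const.sub (Complex.continuous_re.comp
            (Complex.continuous_exp.comp (Complex.continuous_ofReal.neg.mul continuous_const)))
        have := hc.tendsto 0
        rw [show (1 - (Complex.exp (-((0:ℝ):ℂ) * FIC β t)).re) = 0 by norm_num] at this
        exact this.mono_left nhdsWithin_le_nhds
    simpa using hA'
  apply squeeze_zero'
  · filter_upwards with γ; exact ENNReal.toReal_nonneg
  · show ∀ᶠ γ in nhdsWithin 0 (Ioi 0),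
      ((μ γ) {x | ε ≤ |x - a|}).toReal ≤ u⁻¹ * ∫ t in Ioc (-u) u, F γ t
    filter_upwards [self_mem_nhdsWithin] with γ hγ
    haveI := hprob γ hγ
    have hkey := FIkey (μ γ) a u hu
    rw [hεu] at hkey
    have hrw : (∫ t in (-u)..u, (1 - ∫ x, Real.cos (t * (x - a)) ∂(μ γ)))
        = ∫ t in Ioc (-u) u, F γ t := by
      rw [intervalIntegral.integral_of_le (by linarith : (-u) ≤ u)]
      apply setIntegral_congr_fun (measurableSet_Ioc)
      intro t _
      show (1 - ∫ x, Real.cos (t * (x - a)) ∂(μ γ)) = F γ t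
      rw [FIcos_char (μ γ) a β γ t (hchar' γ hγ t)]
    rw [hrw] at hkey
    have : ((μ γ) {x | ε ≤ |x - a|}).toReal ≤ (∫ t in Ioc (-u) u, F γ t) / u :=
      (le_div_iff₀ hu).mpr (by linarith)
    rw [div_eq_inv_mul] at this
    exact this
  · have := hA.const_mul u⁻¹
    simpa using this

/-- The `α = 1` (Cauchy-type) case of the infinite-variance forbidden-interval
theorem: for noise laws with characteristic function
`exp(iaω − γ|ω|(1 − 2iβ sign(ω) ln|ω|/π))` (interpreted as `1` at `ω = 0`;
note `Real.log 0 = 0` makes the formula literally valid there), the detection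
parameter `P_γ = μ_γ((θ−A, θ+A))` tends to `0` as `γ → 0⁺` when the location
`a` lies outside `[θ−A, θ+A]`, and tends to `1` when `θ−A < a < θ+A`. -/
theorem forbidden_interval_alpha_stable_cauchy_case
    (β a : ℝ) (hβ : β ∈ Icc (-1 : ℝ) 1)
    (θ A : ℝ) (hA : 0 < A) (hAθ : A < θ)
    (μ : ℝ → Measure ℝ) (hprob : ∀ γ, 0 < γ → IsProbabilityMeasure (μ γ))
    (hchar : ∀ γ, 0 < γ → ∀ ω : ℝ,
      ∫ x, Complex.exp (Complex.I * ω * x) ∂(μ γ)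
        = Complex.exp (Complex.I * a * ω -
            (γ : ℂ) * ((|ω| : ℝ) : ℂ) *
              (1 - 2 * Complex.I * (β : ℂ) * ((Real.sign ω : ℝ) : ℂ) *
                ((Real.log |ω| : ℝ) : ℂ) / ((Real.pi : ℝ) : ℂ)))) :
    (a ∉ Icc (θ - A) (θ + A) →
      Tendsto (fun γ => ((μ γ) (Ioo (θ - A) (θ + A))).toReal)
        (nhdsWithin 0 (Ioi 0)) (nhds 0)) ∧
    (θ - A < a → a < θ + A →
      Tendsto (fun γ => ((μ γ) (Ioo (θ - A) (θ + A))).toReal)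
        (nhdsWithin 0 (Ioi 0)) (nhds 1)) := by
  have hchar' : ∀ γ, 0 < γ → ∀ t : ℝ, ∫ x, Complex.exp (Complex.I * t * x) ∂(μ γ)
      = Complex.exp (Complex.I * a * t - (γ : ℂ) * FIC β t) := by
    intro γ hγ t
    rw [hchar γ hγ t, FIC]
    congr 1
    ring
  constructor
  · intro ha
    have hcase : a < θ - A ∨ θ + A < a := by
      by_contra h
      push_neg at h
      exact ha ⟨h.1, h.2⟩
    obtain h | h := hcase
    · have hε : (0:ℝ) < θ - A - a := by linarith
      refine squeeze_zero' ?_ ?_ (FItail β a μ hprob hchar' hε)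
      · filter_upwards with γ; exact ENNReal.toReal_nonneg
      · filter_upwards [self_mem_nhdsWithin] with γ hγ
        haveI := hprob γ hγ
        refine ENNReal.toReal_mono (measure_ne_top _ _) (measure_mono ?_)
        intro x hx
        exact le_abs.mpr (Or.inl (by simpa using by linarith [hx.1] : θ - A - a ≤ x - a))
    · have hε : (0:ℝ) < a - (θ + A) := by linarith
      refine squeeze_zero' ?_ ?_ (FItail β a μ hprob hchar' hε)
      · filter_upwards with γ; exact ENNReal.toReal_nonneg
      · filter_upwards [self_mem_nhdsWithin] with γ hγ
        haveI := hprob γ hγ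
        refine ENNReal.toReal_mono (measure_ne_top _ _) (measure_mono ?_)
        intro x hx
        exact le_abs.mpr (Or.inr (by simpa using by linarith [hx.2] : a - (θ + A) ≤ -(x - a)))
  · intro h1 h2
    have hε : (0:ℝ) < min (a - (θ - A)) (θ + A - a) := lt_min (by linarith) (by linarith)
    set ε := min (a - (θ - A)) (θ + A - a) with hεdef
    have htail := FItail β a μ hprob hchar' hε
    have hsub : (Ioo (θ - A) (θ + A))ᶜ ⊆ {x : ℝ | ε ≤ |x - a|} := by
      intro x hx
      show ε ≤ |x - a|
      rw [mem_compl_iff, mem_Ioo, not_and_or] at hx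
      obtain hx | hx := hx
      · push_neg at hx
        refine le_abs.mpr (Or.inr ?_)
        have := min_le_left (a - (θ - A)) (θ + A - a)
        simp only [neg_sub]
        linarith
      · push_neg at hx
        refine le_abs.mpr (Or.inl ?_)
        have := min_le_right (a - (θ - A)) (θ + A - a)
        linarith
    have hcompl0 : Tendsto (fun γ => ((μ γ) (Ioo (θ - A) (θ + A))ᶜ).toReal)
        (nhdsWithin 0 (Ioi 0)) (nhds 0) := by
      refine squeeze_zero' ?_ ?_ htail
      · filter_upwards with γ; exact ENNReal.toReal_nonneg
      · filter_upwards [self_mem_nhdsWithin] with γ hγ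
        haveI := hprob γ hγ
        exact ENNReal.toReal_mono (measure_ne_top _ _) (measure_mono hsub)
    have hlim : Tendsto (fun γ => 1 - ((μ γ) (Ioo (θ - A) (θ + A))ᶜ).toReal)
        (nhdsWithin 0 (Ioi 0)) (nhds 1) := by
      have := hcompl0.const_sub 1
      simpa using this
    apply hlim.congr'
    filter_upwards [self_mem_nhdsWithin] with γ hγ
    haveI := hprob γ hγ
    have hadd : ((μ γ) (Ioo (θ - A) (θ + A))).toReal
        + ((μ γ) (Ioo (θ - A) (θ + A))ᶜ).toReal = 1 := by
      rw [← ENNReal.toReal_add (measure_ne_top _ _) (measure_ne_top _ _),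
        measure_add_measure_compl measurableSet_Ioo, measure_univ, ENNReal.toReal_one]
    linarith
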